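/- Let k and n be positive integers and let a_0, a_1, ..., a_{n-1} be real (or complex) numbers. Then the characteristic polynomial of the k-circulant matrix A_{k,n} satisfies χ(A_{k,n})(λ) = λ^{n−n'} · ∏_{j=0}^{ℓ−1} (λ^{n_j} − Π_j), where P_0, P_1, ..., P_{ℓ−1} is the eigenvalue partition of Z_{n'}, n_j = #P_j, and Π_j = ∏_{t ∈ P_j} λ_{t n/n'}. -/

import Mathlib

open Polynomial

/-- The `k`-circulant matrix `A_{k,n}(a)`: rows and columns indexed by `Z_n`, with
`(i,j)` entry `a_{(j − i k) mod n}`. Its `0`-th row is `(a_0, …, a_{n−1})` and each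
row is the right-circular shift of the previous one by `k` positions. -/
def kCirculant (n k : ℕ) (a : ZMod n → ℂ) : Matrix (ZMod n) (ZMod n) ℂ :=
  fun i j => a (j - (k : ZMod n) * i)

/-- The orbit `S(x) = {x k^b mod n' : b ≥ 0}` of `x ∈ Z_{n'}` under multiplication
by `k`, as a `Finset` of `ZMod n'`. -/
noncomputable def orbitS (n' k : ℕ) [NeZero n'] (x : ZMod n') : Finset (ZMod n') :=
  (Set.toFinite {y : ZMod n' | ∃ b : ℕ, y = x * (k : ZMod n') ^ b}).toFinset

/-- `λ_j = Σ_{l=0}^{n−1} a_l ω^{j l}` where `ω = exp(2πi/n)`. -/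
noncomputable def dftEig (n : ℕ) (a : ZMod n → ℂ) (j : ℕ) : ℂ :=
  ∑ l ∈ Finset.range n, a (l : ZMod n) *
    Complex.exp (2 * Real.pi * Complex.I * (j : ℂ) * (l : ℂ) / (n : ℂ))

open Matrix

section NatAux
lemma dvd_pow_n (a b : ℕ) (ha : a ≠ 0) (hb : b ≠ 0)
    (h : ∀ p, p.Prime → p ∣ a → p ∣ b) : a ∣ b ^ a := by
  rw [← Nat.factorization_le_iff_dvd ha (pow_ne_zero a hb), Nat.factorization_pow]
  rw [Finsupp.le_def]
  intro p
  by_cases hp : a.factorization p = 0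
  · simp [hp]
  · have hpsup : p ∈ a.factorization.support := Finsupp.mem_support_iff.mpr hp
    rw [Nat.support_factorization] at hpsup
    have hpp : p.Prime := Nat.prime_of_mem_primeFactors hpsup
    have hdvd_a : p ∣ a := Nat.dvd_of_factorization_pos hp
    have h1 : 1 ≤ b.factorization p := hpp.factorization_pos_of_dvd hb (h p hpp hdvd_a)
    have h2 : a.factorization p ≤ a := le_of_lt (Nat.factorization_lt p ha)
    calc a.factorization p ≤ a := h2
      _ ≤ a * b.factorization p := Nat.le_mul_of_pos_right a h1
      _ = (a • b.factorization) p := by simp [Finsupp.smul_apply]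
end NatAux


section Cycle
variable {R : Type*} [CommRing R]

lemma addRight_pow_apply (d : ℕ) (m : ℕ) (x : ZMod d) :
    ((Equiv.addRight (1 : ZMod d))^m) x = x + m := by
  induction m with
  | zero => simp
  | succ c ih => rw [pow_succ]; simp [ih]; push_cast; ring

lemma cycle_charpoly (d : ℕ) [NeZero d] (v : ZMod d → R) :
    (Matrix.charpoly (Matrix.of fun s t : ZMod d => if s = t + 1 then v t else 0)) =
      X ^ d - C (∏ t, v t) := by
  rcases eq_or_ne d 1 with rfl | hd
  · rw [Matrix.charpoly, Matrix.det_unique, Matrix.charmatrix_apply_eq]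
    have h1 : (Matrix.of fun s t : ZMod 1 => if s = t + 1 then v t else 0) default default
        = v default := by
      rw [Matrix.of_apply]; exact if_pos (Subsingleton.elim _ _)
    rw [Fintype.prod_unique, pow_one]
    exact congrArg (fun r => X - C r) h1
  · haveI : Fact (1 < d) := ⟨by have := NeZero.ne d; omega⟩
    haveI : Nontrivial (ZMod d) := inferInstance
    have hone : (1 : ZMod d) ≠ 0 := one_ne_zero
    set M : Matrix (ZMod d) (ZMod d) R := Matrix.of fun s t : ZMod d => if s = t + 1 then v t else 0 with hM
    set ρ : Equiv.Perm (ZMod d) := Equiv.addRight (1 : ZMod d) with hρ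
    have hρ_apply : ∀ x, ρ x = x + 1 := fun x => rfl
    have hρ_ne : ρ ≠ 1 := by
      intro h
      apply hone
      have h0 : ρ 0 = (1 : Equiv.Perm (ZMod d)) 0 := congrArg (fun σ => σ 0) h
      rwa [hρ_apply, Equiv.Perm.one_apply, zero_add] at h0
    -- determinant
    rw [Matrix.charpoly, Matrix.det_apply]
    have hvanish : ∀ σ ∈ Finset.univ, σ ∉ ({1, ρ} : Finset (Equiv.Perm (ZMod d))) →
        Equiv.Perm.sign σ • ∏ i, (charmatrix M) (σ i) i = 0 := by
      intro σ _ hσ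
      simp only [Finset.mem_insert, Finset.mem_singleton] at hσ
      push_neg at hσ
      obtain ⟨h1, h2⟩ := hσ
      -- find i with σ i ≠ i and σ i ≠ i + 1
      by_cases hall : ∀ i, σ i = i ∨ σ i = i + 1
      · exfalso
        by_cases hid : ∀ i, σ i = i
        · exact h1 (Equiv.ext hid)
        · push_neg at hid
          obtain ⟨i₀, hi₀⟩ := hid
          have hi₀' : σ i₀ = i₀ + 1 := (hall i₀).resolve_left hi₀
          have hstep : ∀ c : ℕ, σ (i₀ + c) = i₀ + c + 1 := by
            intro c
            induction c with
            | zero => simpa using hi₀'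
            | succ m ih =>
              have : σ (i₀ + m + 1) = i₀ + m + 1 ∨ σ (i₀ + m + 1) = i₀ + m + 1 + 1 :=
                hall _
              rcases this with h | h
              · exfalso
                have : σ (i₀ + m + 1) = σ (i₀ + m) := by rw [h, ih]
                have := σ.injective this
                have : (1 : ZMod d) = 0 := by
                  have h' := this
                  have : (i₀ + m + 1) - (i₀ + m) = 0 := by rw [h']; ring
                  simpa using this
                exact hone this
              · push_cast
                push_cast at h
                convert h using 2 <;> ring
          apply h2
          ext j
          have hj : j = i₀ + ((j - i₀).val : ZMod d) := by
            rw [ZMod.natCast_val, ZMod.cast_id]; ring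
          rw [hρ_apply, hj, hstep]
      · push_neg at hall
        obtain ⟨i, hi1, hi2⟩ := hall
        have : (charmatrix M) (σ i) i = 0 := by
          rw [Matrix.charmatrix_apply_ne _ _ _ hi1]
          have : M (σ i) i = 0 := by
            simp only [hM, Matrix.of_apply, if_neg hi2]
          rw [this, map_zero, neg_zero]
        have hz : (∏ j, (charmatrix M) (σ j) j) = 0 :=
          Finset.prod_eq_zero (Finset.mem_univ i) this
        rw [hz, smul_zero]
    rw [← Finset.sum_subset (Finset.subset_univ ({1, ρ} : Finset (Equiv.Perm (ZMod d))))
      (fun σ hσu hσ => hvanish σ hσu hσ)]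
    rw [Finset.sum_pair (Ne.symm hρ_ne)]
    have hdiag : ∀ i : ZMod d, (charmatrix M) i i = X := by
      intro i
      rw [Matrix.charmatrix_apply_eq]
      have : M i i = 0 := by
        simp only [hM, Matrix.of_apply, if_neg (fun h : i = i + 1 => hone (by
          have : i + 1 - i = 0 := by rw [← h]; ring
          simpa using this))]
      rw [this, map_zero, sub_zero]
    have hterm1 : Equiv.Perm.sign (1 : Equiv.Perm (ZMod d)) • ∏ i, (charmatrix M) ((1 : Equiv.Perm (ZMod d)) i) i = X ^ d := by
      simp only [Equiv.Perm.sign_one, one_smul, Equiv.Perm.one_apply]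
      rw [Finset.prod_congr rfl (fun i _ => hdiag i)]
      simp [ZMod.card]
    have hsign : Equiv.Perm.sign ρ = -(-1 : ℤˣ) ^ d := by
      have hcyc : ρ.IsCycle := by
        refine ⟨0, by simp [hρ_apply, hone], ?_⟩
        intro y _
        refine ⟨(y.val : ℤ), ?_⟩
        rw [zpow_natCast]
        rw [addRight_pow_apply]
        simp [ZMod.natCast_val, ZMod.cast_id]
      have hsupp : ρ.support = Finset.univ := by
        ext x
        simp only [Equiv.Perm.mem_support, Finset.mem_univ, iff_true]
        rw [hρ_apply]
        intro h
        have : (1 : ZMod d) = 0 := by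
          have : x + 1 - x = 0 := by rw [h]; ring
          simpa using this
        exact hone this
      rw [hcyc.sign, hsupp]
      simp [ZMod.card]
    have hterm2 : Equiv.Perm.sign ρ • ∏ i, (charmatrix M) (ρ i) i = - C (∏ t, v t) := by
      have hent : ∀ i : ZMod d, (charmatrix M) (ρ i) i = - C (v i) := by
        intro i
        have hne : ρ i ≠ i := by
          rw [hρ_apply]
          intro h
          have : (1 : ZMod d) = 0 := by
            have : i + 1 - i = 0 := by rw [h]; ring
            simpa using this
          exact hone this
        rw [Matrix.charmatrix_apply_ne _ _ _ hne]
        simp [hM, hρ_apply]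
      rw [Finset.prod_congr rfl (fun i _ => hent i)]
      have h2 : (∏ i : ZMod d, -C (v i)) = (-1 : R[X]) ^ d * C (∏ t, v t) := by
        have : ∀ i : ZMod d, -C (v i) = (-1 : R[X]) * C (v i) := fun i => by ring
        rw [Finset.prod_congr rfl (fun i _ => this i), Finset.prod_mul_distrib,
          Finset.prod_const, map_prod]
        simp [ZMod.card]
      rw [h2, hsign, Units.smul_def]
      have h3 : ((-(-1 : ℤˣ) ^ d : ℤˣ) : ℤ) = -(-1 : ℤ) ^ d := by push_cast; ring
      rw [h3, zsmul_eq_mul]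
      push_cast
      have h4 : ((-1 : R[X]) ^ d) * ((-1 : R[X]) ^ d) = 1 := by
        rw [← mul_pow]; simp
      calc -(-1 : R[X]) ^ d * ((-1 : R[X]) ^ d * C (∏ t, v t))
          = -(((-1 : R[X]) ^ d * (-1 : R[X]) ^ d) * C (∏ t, v t)) := by ring
        _ = - C (∏ t, v t) := by rw [h4, one_mul]
    rw [hterm1, hterm2]
    ring
end Cycle



section Aux
variable {R : Type*} [CommRing R] {ι : Type*} [Fintype ι] [DecidableEq ι]

lemma charpoly_conj (F M : Matrix ι ι R) [Invertible F] :
    (F * M * ⅟F).charpoly = M.charpoly := by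
  let mc : Matrix ι ι R →+* Matrix ι ι R[X] := (C : R →+* R[X]).mapMatrix
  have h1 : mc F * mc (⅟F) = 1 := by
    rw [← _root_.map_mul, mul_invOf_self, _root_.map_one]
  have hs : mc F * Matrix.scalar ι (X : R[X]) * mc (⅟F) = Matrix.scalar ι (X : R[X]) := by
    rw [((Matrix.scalar_commute (X : R[X]) (fun r => Commute.all _ r) (mc F)).symm).eq]
    rw [mul_assoc, h1, mul_one]
  have key : charmatrix (F * M * ⅟F) = mc F * charmatrix M * mc (⅟F) := by
    unfold charmatrix
    rw [mul_sub, sub_mul, hs]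
    congr 1
    rw [_root_.map_mul, _root_.map_mul]
  rw [Matrix.charpoly, key, det_mul, det_mul, Matrix.charpoly]
  have h2 : (mc F).det * (mc (⅟F)).det = 1 := by rw [← det_mul, h1, det_one]
  calc (mc F).det * (charmatrix M).det * (mc (⅟F)).det
      = ((mc F).det * (mc (⅟F)).det) * (charmatrix M).det := by ring
    _ = (charmatrix M).det := by rw [h2, one_mul]

end Aux

section PartA
variable (n k : ℕ) [NeZero n] (a : ZMod n → ℂ)

def zmodFinEquiv (n : ℕ) [NeZero n] : Fin n ≃ ZMod n :=
  ⟨fun i => ((i : ℕ) : ZMod n), fun u => ⟨u.val, ZMod.val_lt u⟩,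
    fun i => by
      ext
      simp [ZMod.val_natCast_of_lt i.isLt],
    fun u => by simp [ZMod.natCast_val, ZMod.cast_id]⟩

lemma sum_range_zmod {M : Type*} [AddCommMonoid M] (n : ℕ) [NeZero n] (g : ZMod n → M) :
    ∑ l ∈ Finset.range n, g (l : ZMod n) = ∑ u : ZMod n, g u := by
  rw [← Fin.sum_univ_eq_sum_range (fun l => g (l : ZMod n))]
  exact Fintype.sum_equiv (zmodFinEquiv n) _ _ (fun i => rfl)

noncomputable def omg (n : ℕ) : ℂ := Complex.exp (2 * Real.pi * Complex.I / n)

lemma homgord : orderOf (omg n) = n :=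
  (Complex.isPrimitiveRoot_exp n (NeZero.ne n)).eq_orderOf.symm

lemma homg_pow_mod (x : ℕ) : (omg n) ^ x = (omg n) ^ (x % n) := by
  conv_lhs => rw [← Nat.div_add_mod x n]
  have h1 : (omg n) ^ n = 1 := (Complex.isPrimitiveRoot_exp n (NeZero.ne n)).pow_eq_one
  rw [pow_add, pow_mul, h1, one_pow, one_mul]

lemma homgpow (x y : ℕ) (h : x ≡ y [MOD n]) : (omg n) ^ x = (omg n) ^ y := by
  rw [homg_pow_mod n x, homg_pow_mod n y]
  exact congrArg (fun z => omg n ^ z) h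

noncomputable def echar : ZMod n → ℂ := fun z => (omg n) ^ z.val

lemma echar_add (x y : ZMod n) : echar n (x + y) = echar n x * echar n y := by
  unfold echar
  rw [← pow_add]
  apply homgpow
  rw [ZMod.val_add]
  exact Nat.mod_modEq _ n

lemma echar_nat (x y : ℕ) : echar n ((x : ZMod n) * (y : ZMod n)) = (omg n) ^ (x * y) := by
  unfold echar
  apply homgpow
  rw [← Nat.cast_mul, ZMod.val_natCast]
  exact Nat.mod_modEq _ _

noncomputable def lamf : ZMod n → ℂ := fun t => ∑ u : ZMod n, a u * echar n (u * t)

noncomputable def Fmat : Matrix (ZMod n) (ZMod n) ℂ := Matrix.of (fun i j => echar n (i * j))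

noncomputable def Bmat : Matrix (ZMod n) (ZMod n) ℂ :=
  Matrix.of (fun s t => if s = (k : ZMod n) * t then lamf n a t else 0)

lemma hAF : kCirculant n k a * Fmat n = Fmat n * Bmat n k a := by
  ext i t
  rw [Matrix.mul_apply, Matrix.mul_apply]
  have hrhs : ∑ s, Fmat n i s * Bmat n k a s t = echar n (i * ((k : ZMod n) * t)) * lamf n a t := by
    rw [Finset.sum_eq_single ((k : ZMod n) * t)]
    · simp [Fmat, Bmat]
    · intro s _ hs
      simp only [Bmat, Matrix.of_apply, if_neg hs, mul_zero]
    · intro h; exact absurd (Finset.mem_univ _) h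
  rw [hrhs]
  have hre := Fintype.sum_equiv (Equiv.addRight ((k : ZMod n) * i))
    (fun u => kCirculant n k a i (u + (k : ZMod n) * i) * Fmat n (u + (k : ZMod n) * i) t)
    (fun j => kCirculant n k a i j * Fmat n j t) (fun u => rfl)
  rw [← hre]
  have hterm : ∀ u : ZMod n,
      kCirculant n k a i (u + (k : ZMod n) * i) * Fmat n (u + (k : ZMod n) * i) t
      = echar n ((k : ZMod n) * i * t) * (a u * echar n (u * t)) := by
    intro u
    unfold kCirculant Fmat
    simp only [Matrix.of_apply, add_sub_cancel_right]
    rw [add_mul, echar_add]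
    ring
  rw [Finset.sum_congr rfl (fun u _ => hterm u), ← Finset.mul_sum]
  have harg : (k : ZMod n) * i * t = i * ((k : ZMod n) * t) := by ring
  rw [harg]
  rfl

lemma hFdet : IsUnit (Fmat n).det := by
  have hω : IsPrimitiveRoot (omg n) n := Complex.isPrimitiveRoot_exp n (NeZero.ne n)
  let e : Fin n ≃ ZMod n := zmodFinEquiv n
  have hsub : (Fmat n).submatrix e e = Matrix.vandermonde (fun i : Fin n => (omg n) ^ (i : ℕ)) := by
    ext i j
    simp only [Matrix.submatrix_apply, Matrix.vandermonde_apply, Fmat, Matrix.of_apply]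
    show echar n (((i : ℕ) : ZMod n) * ((j : ℕ) : ZMod n)) = _
    rw [echar_nat, ← pow_mul]
  have hdet : (Fmat n).det = ((Fmat n).submatrix e e).det :=
    (Matrix.det_submatrix_equiv_self e _).symm
  rw [hdet, hsub, Matrix.det_vandermonde]
  apply isUnit_iff_ne_zero.mpr
  apply Finset.prod_ne_zero_iff.mpr
  intro i _
  apply Finset.prod_ne_zero_iff.mpr
  intro j hj
  rw [Finset.mem_Ioi] at hj
  have hij : (i : ℕ) < (j : ℕ) := hj
  intro h
  have := hω.pow_inj j.isLt i.isLt (sub_eq_zero.mp h)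
  omega

end PartA




section Orbits
variable (n' k : ℕ) [NeZero n']

lemma mem_orbitS (x y : ZMod n') : y ∈ orbitS n' k x ↔ ∃ b : ℕ, y = x * (k : ZMod n') ^ b :=
  Set.Finite.mem_toFinset _

lemma self_mem_orbitS (x : ZMod n') : x ∈ orbitS n' k x :=
  (mem_orbitS n' k x x).mpr ⟨0, by simp⟩

lemma exists_pow_eq_one (hcop : Nat.Coprime n' k) : ∃ E, 0 < E ∧ ((k : ZMod n')) ^ E = 1 := by
  have hu : IsUnit (k : ZMod n') := by
    rw [ZMod.isUnit_iff_coprime]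
    exact hcop.symm
  obtain ⟨u, hu⟩ := hu
  refine ⟨orderOf u, orderOf_pos u, ?_⟩
  rw [← hu, ← Units.val_pow_eq_pow_val, pow_orderOf_eq_one, Units.val_one]

lemma orb_shift (hcop : Nat.Coprime n' k) (x : ZMod n') (b : ℕ) :
    orbitS n' k (x * (k : ZMod n') ^ b) = orbitS n' k x := by
  obtain ⟨E, hE0, hEk⟩ := exists_pow_eq_one n' k hcop
  ext y
  rw [mem_orbitS, mem_orbitS]
  constructor
  · rintro ⟨c, rfl⟩
    exact ⟨b + c, by rw [pow_add, mul_assoc]⟩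
  · rintro ⟨c, rfl⟩
    refine ⟨c + b * (E - 1), ?_⟩
    have harith : b + (c + b * (E - 1)) = c + E * b := by
      have hbE : b * (E - 1) + b = b * E := by
        cases E with
        | zero => omega
        | succ e => simp [Nat.mul_succ]
      have := Nat.mul_comm b E
      omega
    rw [mul_assoc, ← pow_add, harith, pow_add, pow_mul, hEk, one_pow, mul_one]

lemma orb_mem_iff (hcop : Nat.Coprime n' k) (x y : ZMod n') :
    y ∈ orbitS n' k x ↔ orbitS n' k y = orbitS n' k x := by
  constructor
  · intro hy
    obtain ⟨b, rfl⟩ := (mem_orbitS n' k x y).mp hy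
    exact orb_shift n' k hcop x b
  · intro h
    rw [← h]
    exact self_mem_orbitS n' k y

lemma partC (hcop : Nat.Coprime n' k) (w : ZMod n' → ℂ) :
    (Matrix.of fun s t : ZMod n' => if s = (k : ZMod n') * t then w t else 0).charpoly
      = ∏ O ∈ Finset.image (orbitS n' k) Finset.univ, (X ^ O.card - C (∏ t ∈ O, w t)) := by
  classical
  set B' : Matrix (ZMod n') (ZMod n') ℂ :=
    Matrix.of fun s t : ZMod n' => if s = (k : ZMod n') * t then w t else 0 with hB'
  set enc : Finset (ZMod n') → ℕ := fun O => ((Fintype.equivFin (Finset (ZMod n'))) O : ℕ)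
    with henc_def
  have henc : Function.Injective enc := by
    intro O₁ O₂ h
    exact (Fintype.equivFin (Finset (ZMod n'))).injective (Fin.val_injective h)
  set b : ZMod n' → ℕ := fun x => enc (orbitS n' k x) with hb_def
  have horbk : ∀ t : ZMod n', orbitS n' k ((k : ZMod n') * t) = orbitS n' k t := by
    intro t
    have := orb_shift n' k hcop t 1
    rwa [pow_one, mul_comm t] at this
  have hbt : B'.BlockTriangular b := by
    intro i j hij
    show B' i j = 0
    rw [hB', Matrix.of_apply, if_neg]
    intro h
    rw [h] at hij
    rw [hb_def] at hij
    simp only at hij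
    rw [horbk j] at hij
    exact lt_irrefl _ hij
  rw [hbt.charpoly]
  have himg : Finset.image b Finset.univ
      = Finset.image enc (Finset.image (orbitS n' k) Finset.univ) := by
    rw [Finset.image_image]
    rfl
  rw [himg, Finset.prod_image (fun O _ O' _ h => henc h)]
  apply Finset.prod_congr rfl
  intro O hO
  obtain ⟨x₀, _, hx₀⟩ := Finset.mem_image.mp hO
  obtain ⟨E, hE0, hEk⟩ := exists_pow_eq_one n' k hcop
  have hPex : ∃ m, 0 < m ∧ x₀ * (k : ZMod n') ^ m = x₀ := ⟨E, hE0, by rw [hEk, mul_one]⟩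
  set d := Nat.find hPex with hd_def
  obtain ⟨hd0, hdfix⟩ := Nat.find_spec hPex
  haveI : NeZero d := ⟨hd0.ne'⟩
  set en : ZMod d → ZMod n' := fun c => x₀ * (k : ZMod n') ^ (c.val) with hen_def
  have hfixpow : ∀ q : ℕ, x₀ * ((k : ZMod n') ^ d) ^ q = x₀ := by
    intro q
    induction q with
    | zero => simp
    | succ m ih => rw [pow_succ, ← mul_assoc, ih]; exact hdfix
  have hperiod : ∀ m : ℕ, x₀ * (k : ZMod n') ^ m = x₀ * (k : ZMod n') ^ (m % d) := by
    intro m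
    conv_lhs => rw [← Nat.div_add_mod m d]
    rw [pow_add, pow_mul, ← mul_assoc, hfixpow]
  have henNat : ∀ m : ℕ, en ((m : ZMod d)) = x₀ * (k : ZMod n') ^ m := by
    intro m
    rw [hen_def]
    simp only
    rw [ZMod.val_natCast]
    exact (hperiod m).symm
  have hinj_aux : ∀ u v : ℕ, u < v → v < d → x₀ * (k : ZMod n') ^ u ≠ x₀ * (k : ZMod n') ^ v := by
    intro u v huv hvd heq
    have h1 : x₀ * (k : ZMod n') ^ (u + (d - v)) = x₀ := by
      rw [pow_add, ← mul_assoc, heq, mul_assoc, ← pow_add]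
      have : v + (d - v) = d := by omega
      rw [this]
      exact hdfix
    have h2 : 0 < u + (d - v) := by omega
    have h3 : u + (d - v) < d := by omega
    exact Nat.find_min hPex h3 ⟨h2, h1⟩
  have hinj : Function.Injective en := by
    intro c₁ c₂ h
    rw [hen_def] at h
    simp only at h
    rcases lt_trichotomy c₁.val c₂.val with hlt | heq | hgt
    · exact absurd h (hinj_aux _ _ hlt (ZMod.val_lt c₂))
    · exact ZMod.val_injective _ heq
    · exact absurd h.symm (hinj_aux _ _ hgt (ZMod.val_lt c₁))
  have horb_en : ∀ c : ZMod d, orbitS n' k (en c) = O := by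
    intro c
    rw [← hx₀, hen_def]
    exact orb_shift n' k hcop x₀ c.val
  have hbiff : ∀ x : ZMod n', (b x = enc O) ↔ orbitS n' k x = O := fun x =>
    ⟨fun h => henc h, fun h => congrArg enc h⟩
  have hsurj : ∀ x : ZMod n', orbitS n' k x = O → ∃ c : ZMod d, en c = x := by
    intro x hx
    have hxmem : x ∈ orbitS n' k x₀ := by
      rw [hx₀, ← hx]
      exact self_mem_orbitS n' k x
    obtain ⟨m, rfl⟩ := (mem_orbitS n' k x₀ x).mp hxmem
    exact ⟨(m : ZMod d), henNat m⟩
  let e₅ : ZMod d ≃ {x : ZMod n' // b x = enc O} :=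
    Equiv.ofBijective (fun c => ⟨en c, (hbiff _).mpr (horb_en c)⟩)
      ⟨fun c₁ c₂ h => hinj (congrArg Subtype.val h),
       fun x => by
        obtain ⟨c, hc⟩ := hsurj x.val ((hbiff _).mp x.prop)
        exact ⟨c, Subtype.ext hc⟩⟩
  have hsucc : ∀ c : ZMod d, en (c + 1) = (k : ZMod n') * en c := by
    intro c
    have h1 : c + 1 = ((c.val + 1 : ℕ) : ZMod d) := by
      push_cast
      rw [ZMod.natCast_val, ZMod.cast_id]
    rw [h1, henNat, pow_succ, hen_def]
    simp only
    ring
  have hchar1 : (B'.toSquareBlock b (enc O)).charpoly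
      = ((B'.toSquareBlock b (enc O)).submatrix e₅ e₅).charpoly := by
    have := Matrix.charpoly_reindex e₅.symm (B'.toSquareBlock b (enc O))
    rw [← this]
    congr 1
  have hmat : (B'.toSquareBlock b (enc O)).submatrix e₅ e₅
      = Matrix.of (fun s t : ZMod d => if s = t + 1 then w (en t) else 0) := by
    ext c c'
    rw [Matrix.submatrix_apply, Matrix.toSquareBlock_def]
    show B' (en c) (en c') = _
    rw [hB']
    simp only [Matrix.of_apply]
    have hcond : (en c = (k : ZMod n') * en c') ↔ (c = c' + 1) := by
      rw [← hsucc c']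
      exact ⟨fun h => hinj h, fun h => congrArg en h⟩
    rw [if_congr hcond rfl rfl]
  have hcard : O.card = d := by
    have hOimg : O = Finset.image en Finset.univ := by
      ext y
      rw [Finset.mem_image]
      constructor
      · intro hy
        have hy' : y ∈ orbitS n' k x₀ := by rw [hx₀]; exact hy
        have : orbitS n' k y = O := by
          rw [← hx₀]
          exact (orb_mem_iff n' k hcop x₀ y).mp hy'
        obtain ⟨c, hc⟩ := hsurj y this
        exact ⟨c, Finset.mem_univ c, hc⟩
      · rintro ⟨c, _, rfl⟩
        rw [← horb_en c]
        exact self_mem_orbitS n' k (en c)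
    rw [hOimg, Finset.card_image_of_injective _ hinj]
    simp [ZMod.card]
  have hprod : (∏ t ∈ O, w t) = ∏ c : ZMod d, w (en c) := by
    have hOimg : O = Finset.image en Finset.univ := by
      ext y
      rw [Finset.mem_image]
      constructor
      · intro hy
        have hy' : y ∈ orbitS n' k x₀ := by rw [hx₀]; exact hy
        have : orbitS n' k y = O := by
          rw [← hx₀]
          exact (orb_mem_iff n' k hcop x₀ y).mp hy'
        obtain ⟨c, hc⟩ := hsurj y this
        exact ⟨c, Finset.mem_univ c, hc⟩
      · rintro ⟨c, _, rfl⟩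
        rw [← horb_en c]
        exact self_mem_orbitS n' k (en c)
    rw [hOimg, Finset.prod_image (fun c _ c' _ h => hinj h)]
  rw [hchar1, hmat, cycle_charpoly, hcard, hprod]

section Glue

lemma dft_lam (n : ℕ) [NeZero n] (a : ZMod n → ℂ) (j : ℕ) :
    dftEig n a j = lamf n a ((j : ZMod n)) := by
  rw [dftEig]
  unfold lamf
  rw [← sum_range_zmod n (fun u => a u * echar n (u * (j : ZMod n)))]
  apply Finset.sum_congr rfl
  intro l _
  congr 1
  rw [echar_nat]
  show _ = (Complex.exp (2 * Real.pi * Complex.I / n)) ^ (l * j)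
  rw [← Complex.exp_nat_mul]
  congr 1
  push_cast
  ring

theorem stmt0 (n k n' : ℕ) [NeZero n] [NeZero n'] (hk : 0 < k)
    (hdvd : n' ∣ n) (hcop : Nat.Coprime n' k)
    (hmax : ∀ d : ℕ, d ∣ n → Nat.Coprime d k → d ∣ n')
    (a : ZMod n → ℂ) :
    (kCirculant n k a).charpoly =
      X ^ (n - n') *
        ∏ O ∈ Finset.image (orbitS n' k) Finset.univ,
          (X ^ O.card - C (∏ t ∈ O, dftEig n a (t.val * (n / n')))) := by
  classical
  set m₀ := n / n' with hm₀_def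
  have hn_eq : n = n' * m₀ := (Nat.mul_div_cancel' hdvd).symm
  have hn'0 : n' ≠ 0 := NeZero.ne n'
  have hn0 : n ≠ 0 := NeZero.ne n
  have hm₀0 : m₀ ≠ 0 := by
    intro h; rw [hn_eq, h, mul_zero] at hn0; exact hn0 rfl
  -- every prime of m₀ divides k
  have hprime : ∀ p, p.Prime → p ∣ m₀ → p ∣ k := by
    intro p hp hpm
    by_contra hpk
    have hcop_pk : Nat.Coprime p k := (Nat.Prime.coprime_iff_not_dvd hp).mpr hpk
    have hdvd' : n' * p ∣ n := by rw [hn_eq]; exact Nat.mul_dvd_mul_left n' hpm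
    have hmx := hmax (n' * p) hdvd' (Nat.Coprime.mul hcop hcop_pk)
    have hp1 : p ∣ 1 := by
      have h2 : n' * p ∣ n' * 1 := by rwa [mul_one]
      exact (Nat.mul_dvd_mul_iff_left (Nat.pos_of_ne_zero hn'0)).mp h2
    exact hp.one_lt.ne' (Nat.dvd_one.mp hp1)
  have hm₀k : m₀ ∣ k ^ m₀ := dvd_pow_n m₀ k hm₀0 hk.ne' hprime
  set N := m₀ with hN_def
  -- the cyclic part V
  set V : ZMod n → Prop := fun t => (n' : ZMod n) * t = 0 with hV_def
  have hkN : ∀ t : ZMod n, V ((k : ZMod n) ^ N * t) := by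
    intro t
    show (n' : ZMod n) * ((k : ZMod n) ^ N * t) = 0
    have hdn : (n : ℕ) ∣ n' * k ^ N := by rw [hn_eq]; exact Nat.mul_dvd_mul_left n' hm₀k
    have hz : ((n' * k ^ N : ℕ) : ZMod n) = 0 := (ZMod.natCast_eq_zero_iff _ _).mpr hdn
    calc (n' : ZMod n) * ((k : ZMod n) ^ N * t)
        = ((n' * k ^ N : ℕ) : ZMod n) * t := by push_cast; ring
      _ = 0 := by rw [hz, zero_mul]
  have hVk : ∀ t : ZMod n, V t → V ((k : ZMod n) * t) := by
    intro t ht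
    show (n' : ZMod n) * ((k : ZMod n) * t) = 0
    calc (n' : ZMod n) * ((k : ZMod n) * t) = (k : ZMod n) * ((n' : ZMod n) * t) := by ring
      _ = 0 := by rw [ht, mul_zero]
  -- conjugation
  haveI : Invertible (Fmat n) := (Fmat n).invertibleOfIsUnitDet (hFdet n)
  have hchar : (kCirculant n k a).charpoly = (Bmat n k a).charpoly := by
    have hA : kCirculant n k a = Fmat n * Bmat n k a * ⅟(Fmat n) := by
      calc kCirculant n k a = kCirculant n k a * (Fmat n * ⅟(Fmat n)) := by
            rw [mul_invOf_self, mul_one]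
        _ = (kCirculant n k a * Fmat n) * ⅟(Fmat n) := by rw [mul_assoc]
        _ = Fmat n * Bmat n k a * ⅟(Fmat n) := by rw [hAF]
    rw [hA, charpoly_conj]
  -- split into blocks
  let e₂ : {t : ZMod n // V t} ⊕ {t : ZMod n // ¬ V t} ≃ ZMod n := Equiv.sumCompl V
  let Bv : Matrix {t : ZMod n // V t} {t : ZMod n // V t} ℂ :=
    Matrix.of fun s t => Bmat n k a s t
  let Bvu : Matrix {t : ZMod n // V t} {t : ZMod n // ¬ V t} ℂ :=
    Matrix.of fun s t => Bmat n k a s t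
  let Bu : Matrix {t : ZMod n // ¬ V t} {t : ZMod n // ¬ V t} ℂ :=
    Matrix.of fun s t => Bmat n k a s t
  have hBzero : ∀ (s t : ZMod n), ¬ V s → V t → Bmat n k a s t = 0 := by
    intro s t hs ht
    show (if s = (k : ZMod n) * t then lamf n a t else 0) = 0
    rw [if_neg]
    intro h
    exact hs (h ▸ hVk t ht)
  have hsub : (Bmat n k a).submatrix e₂ e₂ = Matrix.fromBlocks Bv Bvu 0 Bu := by
    ext i j
    rcases i with i | i <;> rcases j with j | j
    · simp [e₂, Bv]
    · simp [e₂, Bvu]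
    · simp only [Matrix.submatrix_apply, Equiv.sumCompl_apply_inr, Equiv.sumCompl_apply_inl,
        Matrix.fromBlocks_apply₂₁, Matrix.zero_apply]
      exact hBzero i j i.prop j.prop
    · simp [e₂, Bu]
  have hcharB : (Bmat n k a).charpoly = Bv.charpoly * Bu.charpoly := by
    have h1 : ((Bmat n k a).submatrix e₂ e₂).charpoly = (Bmat n k a).charpoly := by
      have h2 := Matrix.charpoly_reindex e₂.symm (Bmat n k a)
      rw [← h2]
      congr 1
    rw [← h1, hsub, Matrix.charpoly_fromBlocks_zero₂₁]
  -- the nilpotent block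
  have hBupow : ∀ (j : ℕ) (s t : {t : ZMod n // ¬ V t}),
      (Bu ^ j) s t ≠ 0 → (s : ZMod n) = (k : ZMod n) ^ j * t := by
    intro j
    induction j with
    | zero =>
      intro s t h
      rw [pow_zero, Matrix.one_apply] at h
      by_cases hst : s = t
      · rw [hst, pow_zero, one_mul]
      · exact absurd (if_neg hst) h
    | succ m ih =>
      intro s t h
      rw [pow_succ, Matrix.mul_apply] at h
      obtain ⟨r, -, hr⟩ := Finset.exists_ne_zero_of_sum_ne_zero h
      have h1 := ih s r (left_ne_zero_of_mul hr)
      have h2 : (r : ZMod n) = (k : ZMod n) * t := by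
        have h3 := right_ne_zero_of_mul hr
        show _
        by_contra hc
        apply h3
        show (if (r : ZMod n) = (k : ZMod n) * t then lamf n a t else 0) = 0
        exact if_neg hc
      rw [h1, h2, pow_succ]
      ring
  have hBuN : Bu ^ N = 0 := by
    ext s t
    rw [Matrix.zero_apply]
    by_contra h
    exact s.prop (by rw [hBupow N s t h]; exact hkN t)
  have hBu_char : Bu.charpoly = X ^ (Fintype.card {t : ZMod n // ¬ V t}) := by
    have hnil : IsNilpotent Bu := ⟨N, hBuN⟩
    have h0 := (Matrix.isNilpotent_charpoly_sub_pow_of_isNilpotent hnil).eq_zero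
    exact sub_eq_zero.mp h0
  -- the equivalence ZMod n' ≃ V
  have hmem : ∀ s : ZMod n', V (((m₀ * s.val : ℕ) : ZMod n)) := by
    intro s
    show (n' : ZMod n) * ((m₀ * s.val : ℕ) : ZMod n) = 0
    have : ((n' * (m₀ * s.val) : ℕ) : ZMod n) = ((n : ℕ) : ZMod n) * ((s.val : ℕ) : ZMod n) := by
      rw [hn_eq]; push_cast; ring
    calc (n' : ZMod n) * ((m₀ * s.val : ℕ) : ZMod n) = ((n' * (m₀ * s.val) : ℕ) : ZMod n) := by
          push_cast; ring
      _ = ((n : ℕ) : ZMod n) * ((s.val : ℕ) : ZMod n) := this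
      _ = 0 := by rw [ZMod.natCast_self, zero_mul]
  have hval : ∀ s : ZMod n', (((m₀ * s.val : ℕ) : ZMod n)).val = m₀ * s.val := by
    intro s
    apply ZMod.val_natCast_of_lt
    calc m₀ * s.val < m₀ * n' := by
          exact (Nat.mul_lt_mul_left (Nat.pos_of_ne_zero hm₀0)).mpr (ZMod.val_lt s)
      _ = n := by rw [hn_eq, Nat.mul_comm]
  have hinj₃ : Function.Injective (fun s : ZMod n' => (⟨((m₀ * s.val : ℕ) : ZMod n), hmem s⟩ :
      {t : ZMod n // V t})) := by
    intro s₁ s₂ h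
    have h1 : (((m₀ * s₁.val : ℕ) : ZMod n)) = (((m₀ * s₂.val : ℕ) : ZMod n)) :=
      congrArg Subtype.val h
    have h2 : m₀ * s₁.val = m₀ * s₂.val := by
      rw [← hval s₁, ← hval s₂, h1]
    exact ZMod.val_injective n' (Nat.eq_of_mul_eq_mul_left (Nat.pos_of_ne_zero hm₀0) h2)
  have hsurj₃ : Function.Surjective (fun s : ZMod n' => (⟨((m₀ * s.val : ℕ) : ZMod n), hmem s⟩ :
      {t : ZMod n // V t})) := by
    rintro ⟨t, ht⟩
    have hdvd_t : m₀ ∣ t.val := by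
      have h1 : ((n' * t.val : ℕ) : ZMod n) = 0 := by
        push_cast
        rw [ZMod.natCast_val, ZMod.cast_id]
        exact ht
      have h2 : (n : ℕ) ∣ n' * t.val := (ZMod.natCast_eq_zero_iff _ _).mp h1
      have h2' : n' * m₀ ∣ n' * t.val := by rw [← hn_eq]; exact h2
      exact (Nat.mul_dvd_mul_iff_left (Nat.pos_of_ne_zero hn'0)).mp h2'
    refine ⟨((t.val / m₀ : ℕ) : ZMod n'), ?_⟩
    apply Subtype.ext
    show ((m₀ * (((t.val / m₀ : ℕ) : ZMod n')).val : ℕ) : ZMod n) = t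
    rw [ZMod.val_natCast]
    have hmod : m₀ * ((t.val / m₀) % n') ≡ m₀ * (t.val / m₀) [MOD m₀ * n'] :=
      Nat.ModEq.mul_left' m₀ (Nat.mod_modEq _ n')
    have heq : m₀ * (t.val / m₀) = t.val := Nat.mul_div_cancel' hdvd_t
    rw [heq] at hmod
    have : ((m₀ * ((t.val / m₀) % n') : ℕ) : ZMod n) = ((t.val : ℕ) : ZMod n) := by
      rw [ZMod.natCast_eq_natCast_iff]
      have hmn : m₀ * n' = n := by rw [hn_eq, Nat.mul_comm]
      rwa [hmn] at hmod
    rw [this, ZMod.natCast_val, ZMod.cast_id]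
  let e₃ : ZMod n' ≃ {t : ZMod n // V t} :=
    Equiv.ofBijective _ ⟨hinj₃, hsurj₃⟩
  have he₃val : ∀ s : ZMod n', ((e₃ s : ZMod n)) = ((m₀ * s.val : ℕ) : ZMod n) := fun s => rfl
  -- intertwining
  have he₃k : ∀ s : ZMod n', ((e₃ ((k : ZMod n') * s) : ZMod n))
      = (k : ZMod n) * (e₃ s : ZMod n) := by
    intro s
    rw [he₃val, he₃val]
    have h1 : (k : ZMod n') * s = ((k * s.val : ℕ) : ZMod n') := by
      push_cast
      rw [ZMod.natCast_val, ZMod.cast_id]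
    rw [h1, ZMod.val_natCast]
    have hmod : m₀ * ((k * s.val) % n') ≡ m₀ * (k * s.val) [MOD m₀ * n'] :=
      Nat.ModEq.mul_left' m₀ (Nat.mod_modEq _ n')
    have hmn : m₀ * n' = n := by rw [hn_eq, Nat.mul_comm]
    have : ((m₀ * ((k * s.val) % n') : ℕ) : ZMod n) = ((m₀ * (k * s.val) : ℕ) : ZMod n) := by
      rw [ZMod.natCast_eq_natCast_iff]
      rwa [hmn] at hmod
    rw [this]
    push_cast
    ring
  -- reindex Bv to ZMod n'
  set w : ZMod n' → ℂ := fun t => lamf n a ((e₃ t : ZMod n)) with hw_def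
  have hBv : Bv.charpoly
      = (Matrix.of fun s t : ZMod n' => if s = (k : ZMod n') * t then w t else 0).charpoly := by
    have h1 : Bv.submatrix e₃ e₃
        = Matrix.of fun s t : ZMod n' => if s = (k : ZMod n') * t then w t else 0 := by
      ext s t
      rw [Matrix.submatrix_apply]
      show (if ((e₃ s : ZMod n)) = (k : ZMod n) * ((e₃ t : ZMod n)) then lamf n a ((e₃ t : ZMod n)) else 0) = _
      rw [Matrix.of_apply]
      have hcond : (((e₃ s : ZMod n)) = (k : ZMod n) * ((e₃ t : ZMod n))) ↔ (s = (k : ZMod n') * t) := by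
        rw [← he₃k t]
        constructor
        · intro h
          have := e₃.injective (Subtype.ext h)
          exact this
        · intro h
          rw [h]
      rw [if_congr hcond rfl rfl]
    have h2 := Matrix.charpoly_reindex e₃.symm Bv
    rw [← h2]
    rw [show (Matrix.reindex e₃.symm e₃.symm Bv) = Bv.submatrix e₃ e₃ from rfl, h1]
  -- cards
  have hcardV : Fintype.card {t : ZMod n // V t} = n' := by
    rw [← Fintype.card_congr e₃]
    simp [ZMod.card]
  have hcardU : Fintype.card {t : ZMod n // ¬ V t} = n - n' := by
    rw [Fintype.card_subtype_compl, hcardV, ZMod.card]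
  -- dft identification
  have hdft : ∀ t : ZMod n', dftEig n a (t.val * (n / n')) = w t := by
    intro t
    rw [dft_lam, hw_def]
    simp only
    congr 1
    rw [he₃val]
    congr 1
    rw [Nat.mul_comm]
  -- assemble
  rw [hchar, hcharB, hBv, partC n' k hcop w, hBu_char, hcardU, mul_comm]
  congr 1
  apply Finset.prod_congr rfl
  intro O _
  congr 1
  congr 1
  apply Finset.prod_congr rfl
  intro t _
  exact (hdft t).symm

end Glue
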